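/- Let f : ℝ^d → ℝ be L-smooth and twice continuously differentiable, γ ≤ 1/(2L), and let X ⊆ ℝ^d be measurable. If gradient descent x_{t+1} = x_t - γ∇f(x_t) is initialized uniformly at random in a measurable set W with ℒ(W) > 0, then the probability that x_t ∈ X for some 0 ≤ t ≤ T is at most 2^{(T+1)d} · ℒ(X)/ℒ(W). -/

import Mathlib

open MeasureTheory InnerProductSpace
open scoped ENNReal

section stmt3aux
variable {d : ℕ}

local notation "E" => EuclideanSpace ℝ (Fin d)

lemma det_lower {γ L : ℝ} (hγ : 0 ≤ γ) (hγL : γ * L ≤ 1/2)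
    (T : E →L[ℝ] E) (hsymm : (T : E →ₗ[ℝ] E).IsSymmetric) (hTnorm : ‖T‖ ≤ L) :
    ((1:ℝ)/2)^d ≤ ((1 : E →L[ℝ] E) - γ • T).det := by
  have hrank : Module.finrank ℝ E = d := finrank_euclideanSpace_fin
  set b := hsymm.eigenvectorBasis hrank with hb
  set μ := hsymm.eigenvalues hrank with hμ
  have hev : ∀ i, T (b i) = (μ i : ℝ) • b i := fun i => hsymm.apply_eigenvectorBasis hrank i
  have hμ_le : ∀ i, |μ i| ≤ L := by
    intro i
    have h1 : ‖b i‖ = 1 := (b.orthonormal).1 i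
    have : ‖T (b i)‖ ≤ L := by
      calc ‖T (b i)‖ ≤ ‖T‖ * ‖b i‖ := T.le_opNorm _
        _ ≤ L := by rw [h1, mul_one]; exact hTnorm
    rwa [hev i, norm_smul, h1, mul_one, Real.norm_eq_abs] at this
  -- compute det via matrix in basis b
  have hmat : LinearMap.toMatrix b.toBasis b.toBasis
      ((1 : E →L[ℝ] E) - γ • T : E →L[ℝ] E) = Matrix.diagonal (fun i => 1 - γ * μ i) := by
    ext i j
    rw [LinearMap.toMatrix_apply]
    have : ((1 : E →L[ℝ] E) - γ • T : E →L[ℝ] E) (b.toBasis j) = (1 - γ * μ j) • b.toBasis j := by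
      simp only [OrthonormalBasis.coe_toBasis, ContinuousLinearMap.coe_sub',
        Pi.sub_apply, ContinuousLinearMap.coe_smul', Pi.smul_apply,
        ContinuousLinearMap.one_apply, hev j, smul_smul, sub_smul, one_smul]
    rw [ContinuousLinearMap.coe_coe, this, _root_.map_smul]
    simp only [Module.Basis.repr_smul, Module.Basis.repr_self, Finsupp.smul_single, smul_eq_mul, mul_one,
      Finsupp.single_apply, Matrix.diagonal_apply]
    rcases eq_or_ne i j with h | h
    · simp [h]
    · simp [h, Ne.symm h]
  have hdet : ((1 : E →L[ℝ] E) - γ • T).det = ∏ i, (1 - γ * μ i) := by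
    rw [ContinuousLinearMap.det, ← LinearMap.det_toMatrix b.toBasis, hmat,
      Matrix.det_diagonal]
  rw [hdet]
  have : ∀ i, (1:ℝ)/2 ≤ 1 - γ * μ i := by
    intro i
    have : γ * μ i ≤ γ * L := by
      have := hμ_le i
      nlinarith [abs_le.mp (hμ_le i)]
    linarith
  calc ((1:ℝ)/2)^d = ∏ _i : Fin d, ((1:ℝ)/2) := by simp
    _ ≤ ∏ i, (1 - γ * μ i) := Finset.prod_le_prod (fun i _ => by norm_num) (fun i _ => this i)


lemma preimage_meas_le {g : EuclideanSpace ℝ (Fin d) → EuclideanSpace ℝ (Fin d)}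
    {G : EuclideanSpace ℝ (Fin d) → EuclideanSpace ℝ (Fin d) →L[ℝ] EuclideanSpace ℝ (Fin d)}
    (hg : Function.Injective g) (hd : ∀ x, HasFDerivAt g (G x) x)
    (hdet : ∀ x, ((1:ℝ)/2)^d ≤ (G x).det) {A : Set (EuclideanSpace ℝ (Fin d))}
    (hA : MeasurableSet A) : volume (g ⁻¹' A) ≤ 2^d * volume A := by
  have hgc : Continuous g := by
    rw [continuous_iff_continuousAt]; exact fun x => (hd x).continuousAt
  have hs : MeasurableSet (g ⁻¹' A) := hA.preimage hgc.measurable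
  have key := lintegral_abs_det_fderiv_le_addHaar_image volume hs
    (fun x _ => (hd x).hasFDerivWithinAt) (hg.injOn)
  have h1 : ENNReal.ofReal (((1:ℝ)/2)^d) * volume (g ⁻¹' A) ≤ volume A := by
    calc ENNReal.ofReal (((1:ℝ)/2)^d) * volume (g ⁻¹' A)
        = ∫⁻ _x in g ⁻¹' A, ENNReal.ofReal (((1:ℝ)/2)^d) ∂volume := by
          rw [setLIntegral_const]
      _ ≤ ∫⁻ x in g ⁻¹' A, ENNReal.ofReal |(G x).det| ∂volume := by
          refine lintegral_mono fun x => ?_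
          exact ENNReal.ofReal_le_ofReal ((hdet x).trans (le_abs_self _))
      _ ≤ volume (g '' (g ⁻¹' A)) := key
      _ ≤ volume A := measure_mono (Set.image_preimage_subset _ _)
  have hone : (2:ℝ≥0∞)^d * ENNReal.ofReal (((1:ℝ)/2)^d) = 1 := by
    rw [ENNReal.ofReal_pow (by norm_num), ← mul_pow]
    have : (2:ℝ≥0∞) * ENNReal.ofReal ((1:ℝ)/2) = 1 := by
      rw [show ((1:ℝ)/2) = (2:ℝ)⁻¹ by norm_num, ENNReal.ofReal_inv_of_pos (by norm_num)]
      norm_num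
      rw [ENNReal.mul_inv_cancel (by norm_num) (by norm_num)]
    rw [this, one_pow]
  calc volume (g ⁻¹' A) = 2^d * (ENNReal.ofReal (((1:ℝ)/2)^d) * volume (g ⁻¹' A)) := by
        rw [← mul_assoc, hone, one_mul]
    _ ≤ 2^d * volume A := by exact mul_le_mul_right h1 _

lemma geom_le' {r : ℝ≥0∞} (hr : 2 ≤ r) (n : ℕ) : ∑ t ∈ Finset.range n, r^t ≤ r^n := by
  induction n with
  | zero => simp
  | succ n ih =>
    rw [Finset.sum_range_succ, pow_succ]
    calc (∑ t ∈ Finset.range n, r^t) + r^n ≤ r^n + r^n := by gcongr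
      _ = r^n * 2 := by ring
      _ ≤ r^n * r := by gcongr




/-- GD `x_{t+1} = x_t - γ∇f(x_t)` initialized uniformly at random in `W`
(of positive finite measure) hits a measurable set `X` within the first `T` steps with
probability at most `2^{(T+1)d} · ℒ(X)/ℒ(W)`. -/
theorem stmt3 {d : ℕ} (L γ : ℝ) (hL : 0 < L) (hγ : 0 < γ) (hγL : γ ≤ 1 / (2 * L))
    (f : EuclideanSpace ℝ (Fin d) → ℝ)
    (f' : EuclideanSpace ℝ (Fin d) → EuclideanSpace ℝ (Fin d))
    (hf : ContDiff ℝ 2 f)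
    (hgrad : ∀ x, HasGradientAt f (f' x) x)
    (hlip : LipschitzWith (Real.toNNReal L) f')
    (W X : Set (EuclideanSpace ℝ (Fin d))) (hW : MeasurableSet W) (hX : MeasurableSet X)
    (hWpos : 0 < volume W) (hWfin : volume W < ⊤)
    (T : ℕ) :
    volume {x₀ ∈ W | ∃ t ≤ T, (fun x => x - γ • f' x)^[t] x₀ ∈ X} / volume W ≤
      (2 : ℝ≥0∞) ^ ((T + 1) * d) * volume X / volume W := by
  set g : EuclideanSpace ℝ (Fin d) → EuclideanSpace ℝ (Fin d) := fun x => x - γ • f' x with hg_def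
  -- γ L ≤ 1/2
  have hγL2 : γ * L ≤ 1/2 := by
    have h := mul_le_mul_of_nonneg_right hγL hL.le
    rwa [div_mul_eq_mul_div, one_mul, mul_comm 2 L, ← div_div, div_self hL.ne'] at h
  -- Lipschitz estimate for f'
  have hlipnorm : ∀ x y, ‖f' x - f' y‖ ≤ L * ‖x - y‖ := by
    intro x y
    have := hlip.dist_le_mul x y
    rwa [dist_eq_norm, dist_eq_norm, Real.coe_toNNReal L hL.le] at this
  -- g is injective
  have hginj : Function.Injective g := by
    intro x y hxy
    by_contra hne
    have hnorm : ‖γ • (f' x - f' y)‖ ≤ (1/2) * ‖x - y‖ := by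
      rw [norm_smul, Real.norm_eq_abs, abs_of_pos hγ]
      calc γ * ‖f' x - f' y‖ ≤ γ * (L * ‖x - y‖) := by
            exact mul_le_mul_of_nonneg_left (hlipnorm x y) hγ.le
        _ = (γ * L) * ‖x - y‖ := by ring
        _ ≤ (1/2) * ‖x - y‖ := by
            exact mul_le_mul_of_nonneg_right hγL2 (norm_nonneg _)
    have h0 : g x - g y = (x - y) - γ • (f' x - f' y) := by
      simp only [hg_def, smul_sub]; abel
    have hlb : (1/2) * ‖x - y‖ ≤ ‖g x - g y‖ := by
      rw [h0]
      have := norm_sub_norm_le (x - y) (γ • (f' x - f' y))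
      linarith
    rw [hxy, sub_self, norm_zero] at hlb
    have : ‖x - y‖ = 0 := le_antisymm (by linarith) (norm_nonneg _)
    exact hne (sub_eq_zero.mp (by rwa [norm_eq_zero] at this))
  -- f' is C¹
  have hf'eq : f' = fun x => (toDual ℝ (EuclideanSpace ℝ (Fin d))).symm (fderiv ℝ f x) := by
    funext x
    rw [(hasGradientAt_iff_hasFDerivAt.mp (hgrad x)).fderiv]
    simp
  have hfderiv_cd : ContDiff ℝ 1 (fderiv ℝ f) := hf.fderiv_right (by norm_num)
  have hf'cd : ContDiff ℝ 1 f' := by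
    rw [hf'eq]
    exact (toDual ℝ (EuclideanSpace ℝ (Fin d))).symm.contDiff.comp hfderiv_cd
  have hf'diff : Differentiable ℝ f' := hf'cd.differentiable (by norm_num)
  set G := fun x => fderiv ℝ f' x with hG_def
  have hG : ∀ x, HasFDerivAt f' (G x) x := fun x => (hf'diff x).hasFDerivAt
  have hGnorm : ∀ x, ‖G x‖ ≤ L := by
    intro x
    have := (hG x).le_of_lipschitz hlip
    rwa [Real.coe_toNNReal L hL.le] at this
  -- symmetry of G x
  set Dc : EuclideanSpace ℝ (Fin d) →L[ℝ] (EuclideanSpace ℝ (Fin d) →L[ℝ] ℝ) :=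
    (innerSL ℝ :
      EuclideanSpace ℝ (Fin d) →L[ℝ] (EuclideanSpace ℝ (Fin d) →L[ℝ] ℝ)) with hDc_def
  have hDc_apply : ∀ y, Dc y = toDual ℝ (EuclideanSpace ℝ (Fin d)) y := fun y => rfl
  have hsym : ∀ x, ((G x : EuclideanSpace ℝ (Fin d) →L[ℝ] EuclideanSpace ℝ (Fin d)) :
      EuclideanSpace ℝ (Fin d) →ₗ[ℝ] EuclideanSpace ℝ (Fin d)).IsSymmetric := by
    intro x
    have h1 : ∀ y, HasFDerivAt f (Dc (f' y)) y := by
      intro y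
      rw [hDc_apply]
      exact hasGradientAt_iff_hasFDerivAt.mp (hgrad y)
    have h2 : HasFDerivAt (fun y => Dc (f' y)) (Dc.comp (G x)) x :=
      Dc.hasFDerivAt.comp x (hG x)
    have hsymm := second_derivative_symmetric h1 h2
    intro u v
    have h3 := hsymm u v
    simp only [ContinuousLinearMap.comp_apply, hDc_apply, toDual_apply_apply] at h3
    calc (inner ℝ ((G x) u) v : ℝ) = inner ℝ ((G x) v) u := h3
      _ = inner ℝ u ((G x) v) := real_inner_comm _ _
  -- derivative of g
  have hgG : ∀ x, HasFDerivAt g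
      ((1 : EuclideanSpace ℝ (Fin d) →L[ℝ] EuclideanSpace ℝ (Fin d)) - γ • G x) x := by
    intro x
    exact (hasFDerivAt_id x).sub ((hG x).const_smul γ)
  have hdet : ∀ x, ((1:ℝ)/2)^d ≤
      ((1 : EuclideanSpace ℝ (Fin d) →L[ℝ] EuclideanSpace ℝ (Fin d)) - γ • G x).det := fun x =>
    det_lower hγ.le hγL2 (G x) (hsym x) (hGnorm x)
  have hstep : ∀ A : Set (EuclideanSpace ℝ (Fin d)), MeasurableSet A →
      volume (g ⁻¹' A) ≤ 2^d * volume A := fun A hA =>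
    preimage_meas_le hginj hgG hdet hA
  have hgc : Continuous g := by
    rw [continuous_iff_continuousAt]; exact fun x => (hgG x).differentiableAt.continuousAt
  have hiter : ∀ t : ℕ, ∀ A : Set (EuclideanSpace ℝ (Fin d)), MeasurableSet A →
      volume (g^[t] ⁻¹' A) ≤ ((2:ℝ≥0∞)^d)^t * volume A := by
    intro t
    induction t with
    | zero => intro A hA; simp
    | succ t ih =>
      intro A hA
      rw [Function.iterate_succ, Set.preimage_comp]
      calc volume (g ⁻¹' (g^[t] ⁻¹' A)) ≤ 2^d * volume (g^[t] ⁻¹' A) :=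
            hstep _ (hA.preimage (hgc.iterate t).measurable)
        _ ≤ 2^d * (((2:ℝ≥0∞)^d)^t * volume A) := mul_le_mul_right (ih A hA) _
        _ = ((2:ℝ≥0∞)^d)^(t+1) * volume A := by ring
  have hsub : {x₀ ∈ W | ∃ t ≤ T, g^[t] x₀ ∈ X} ⊆
      ⋃ t ∈ Finset.range (T+1), g^[t] ⁻¹' X := by
    rintro x ⟨-, t, htT, hx⟩
    exact Set.mem_biUnion (Finset.mem_range.mpr (Nat.lt_succ_of_le htT)) hx
  refine ENNReal.div_le_div_right ?_ _
  rcases Nat.eq_zero_or_pos d with hd0 | hd1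
  · subst hd0
    haveI : Subsingleton (EuclideanSpace ℝ (Fin 0)) := ⟨fun a b => PiLp.ext fun i => Fin.elim0 i⟩
    have hsub0 : {x₀ ∈ W | ∃ t ≤ T, g^[t] x₀ ∈ X} ⊆ X := by
      rintro x ⟨-, t, -, hx⟩
      rwa [Subsingleton.elim x (g^[t] x)]
    calc volume {x₀ ∈ W | ∃ t ≤ T, g^[t] x₀ ∈ X} ≤ volume X := measure_mono hsub0
      _ ≤ 2^((T+1)*0) * volume X := by simp
  · have h2d : (2:ℝ≥0∞) ≤ 2^d := by
      calc (2:ℝ≥0∞) = 2^1 := (pow_one 2).symm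
        _ ≤ 2^d := by gcongr <;> [norm_num; exact hd1]
    calc volume {x₀ ∈ W | ∃ t ≤ T, g^[t] x₀ ∈ X}
        ≤ volume (⋃ t ∈ Finset.range (T+1), g^[t] ⁻¹' X) := measure_mono hsub
      _ ≤ ∑ t ∈ Finset.range (T+1), volume (g^[t] ⁻¹' X) := measure_biUnion_finset_le _ _
      _ ≤ ∑ t ∈ Finset.range (T+1), ((2:ℝ≥0∞)^d)^t * volume X :=
          Finset.sum_le_sum (fun t _ => hiter t X hX)
      _ = (∑ t ∈ Finset.range (T+1), ((2:ℝ≥0∞)^d)^t) * volume X := by rw [← Finset.sum_mul]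
      _ ≤ ((2:ℝ≥0∞)^d)^(T+1) * volume X := mul_le_mul_left (geom_le' h2d _) _
      _ = 2^((T+1)*d) * volume X := by rw [← pow_mul, mul_comm d (T+1)]
end stmt3aux
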